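/- For α1, α2 ∈ (0,π), φ ∈ (0,π), and a positive integer ℓ, with X1 = cos(α1) + sin(α1)(cos(φ)i + sin(φ)j), X2 = cos(α2) + sin(α2)i, P1 = cos(φ)i + sin(φ)j, and Q1 = (X1X2)^ℓ · P1 · (X1X2)^{−ℓ}, the i-component of Q1 is a polynomial in cos(φ), and the j- and k-components of Q1 are each sin(φ) times a polynomial in cos(φ). -/

import Mathlib

open Real Quaternion Polynomial

abbrev P4 := Polynomial ℝ × Polynomial ℝ × Polynomial ℝ × Polynomial ℝ

noncomputable def evalQ (p : P4) (φ : ℝ) : ℍ[ℝ] :=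
  ⟨p.1.eval (Real.cos φ), p.2.1.eval (Real.cos φ),
   Real.sin φ * p.2.2.1.eval (Real.cos φ), Real.sin φ * p.2.2.2.eval (Real.cos φ)⟩

noncomputable def mulP (p q : P4) : P4 :=
  (p.1 * q.1 - p.2.1 * q.2.1 - (1 - X ^ 2) * (p.2.2.1 * q.2.2.1 + p.2.2.2 * q.2.2.2),
   p.1 * q.2.1 + p.2.1 * q.1 + (1 - X ^ 2) * (p.2.2.1 * q.2.2.2 - p.2.2.2 * q.2.2.1),
   p.1 * q.2.2.1 - p.2.1 * q.2.2.2 + p.2.2.1 * q.1 + p.2.2.2 * q.2.1,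
   p.1 * q.2.2.2 + p.2.1 * q.2.2.1 - p.2.2.1 * q.2.1 + p.2.2.2 * q.1)

lemma evalQ_mul (p q : P4) (φ : ℝ) : evalQ (mulP p q) φ = evalQ p φ * evalQ q φ := by
  have hs : Real.sin φ * Real.sin φ = 1 - Real.cos φ * Real.cos φ := by
    have := Real.sin_sq_add_cos_sq φ; nlinarith
  ext
  · rw [Quaternion.re_mul]
    simp only [evalQ, mulP, Polynomial.eval_sub, Polynomial.eval_mul,
      Polynomial.eval_add, Polynomial.eval_one, Polynomial.eval_pow, Polynomial.eval_X]
    linear_combination (Polynomial.eval (Real.cos φ) p.2.2.1 * Polynomial.eval (Real.cos φ) q.2.2.1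
      + Polynomial.eval (Real.cos φ) p.2.2.2 * Polynomial.eval (Real.cos φ) q.2.2.2) * hs
  · rw [Quaternion.imI_mul]
    simp only [evalQ, mulP, Polynomial.eval_sub, Polynomial.eval_mul,
      Polynomial.eval_add, Polynomial.eval_one, Polynomial.eval_pow, Polynomial.eval_X]
    linear_combination (Polynomial.eval (Real.cos φ) p.2.2.2 * Polynomial.eval (Real.cos φ) q.2.2.1
      - Polynomial.eval (Real.cos φ) p.2.2.1 * Polynomial.eval (Real.cos φ) q.2.2.2) * hs
  · rw [Quaternion.imJ_mul]
    simp only [evalQ, mulP, Polynomial.eval_sub, Polynomial.eval_mul,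
      Polynomial.eval_add, Polynomial.eval_X]
    ring
  · rw [Quaternion.imK_mul]
    simp only [evalQ, mulP, Polynomial.eval_sub, Polynomial.eval_mul,
      Polynomial.eval_add, Polynomial.eval_X]
    ring

noncomputable def oneP : P4 := (1, 0, 0, 0)

lemma evalQ_one (φ : ℝ) : evalQ oneP φ = 1 := by
  ext <;> simp [evalQ, oneP]

noncomputable def powP (p : P4) : ℕ → P4
  | 0 => oneP
  | n + 1 => mulP p (powP p n)

lemma evalQ_pow (p : P4) (n : ℕ) (φ : ℝ) : evalQ (powP p n) φ = (evalQ p φ) ^ n := by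
  induction n with
  | zero => simp [powP, evalQ_one]
  | succ n ih => rw [powP, evalQ_mul, ih, pow_succ']

noncomputable def starP (p : P4) : P4 := (p.1, -p.2.1, -p.2.2.1, -p.2.2.2)

lemma evalQ_star (p : P4) (φ : ℝ) : evalQ (starP p) φ = star (evalQ p φ) := by
  ext <;> simp only [Quaternion.re_star, Quaternion.imI_star, Quaternion.imJ_star,
    Quaternion.imK_star] <;> simp [evalQ, starP] <;> ring

theorem stmt12 (α₁ α₂ : ℝ) (hα₁ : α₁ ∈ Set.Ioo 0 π) (hα₂ : α₂ ∈ Set.Ioo 0 π)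
    (ℓ : ℕ) (hℓ : 1 ≤ ℓ) :
    ∃ p q r : Polynomial ℝ, ∀ φ ∈ Set.Ioo (0 : ℝ) π,
      ∀ X₁ X₂ P₁ Q₁ : ℍ[ℝ],
        X₁ = (⟨cos α₁, sin α₁ * cos φ, sin α₁ * sin φ, 0⟩ : ℍ[ℝ]) →
        X₂ = (⟨cos α₂, sin α₂, 0, 0⟩ : ℍ[ℝ]) →
        P₁ = (⟨0, cos φ, sin φ, 0⟩ : ℍ[ℝ]) →
        Q₁ = (X₁ * X₂) ^ ℓ * P₁ * ((X₁ * X₂) ^ ℓ)⁻¹ →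
        Q₁.imI = p.eval (cos φ) ∧
        Q₁.imJ = sin φ * q.eval (cos φ) ∧
        Q₁.imK = sin φ * r.eval (cos φ) := by
  set x₁ : P4 := (C (cos α₁), C (sin α₁) * X, C (sin α₁), 0) with hx₁
  set x₂ : P4 := (C (cos α₂), C (sin α₂), 0, 0) with hx₂
  set p₁ : P4 := (0, X, 1, 0) with hp₁
  set w : P4 := mulP (mulP (powP (mulP x₁ x₂) ℓ) p₁) (starP (powP (mulP x₁ x₂) ℓ)) with hw
  refine ⟨w.2.1, w.2.2.1, w.2.2.2, ?_⟩
  intro φ hφ X₁ X₂ P₁ Q₁ h1 h2 h3 h4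
  have e1 : X₁ = evalQ x₁ φ := by
    rw [h1]; ext <;> simp [evalQ, hx₁] <;> ring
  have e2 : X₂ = evalQ x₂ φ := by
    rw [h2]; ext <;> simp [evalQ, hx₂]
  have e3 : P₁ = evalQ p₁ φ := by
    rw [h3]; ext <;> simp [evalQ, hp₁]
  have hA : (X₁ * X₂) ^ ℓ = evalQ (powP (mulP x₁ x₂) ℓ) φ := by
    rw [evalQ_pow, evalQ_mul, e1, e2]
  have hnorm : normSq ((X₁ * X₂) ^ ℓ) = 1 := by
    have n1 : normSq X₁ = 1 := by
      rw [Quaternion.normSq_def', h1]; simp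
      try nlinarith [Real.sin_sq_add_cos_sq φ, Real.sin_sq_add_cos_sq α₁]
    have n2 : normSq X₂ = 1 := by
      rw [Quaternion.normSq_def', h2]; simp
      try nlinarith [Real.sin_sq_add_cos_sq α₂]
    rw [map_pow, map_mul, n1, n2]; simp
  have hinv : ((X₁ * X₂) ^ ℓ)⁻¹ = star ((X₁ * X₂) ^ ℓ) := by
    rw [Quaternion.inv_def, hnorm]; simp
  have hQ : Q₁ = evalQ w φ := by
    rw [h4, hinv, hw, evalQ_mul, evalQ_mul, evalQ_star, ← hA, ← e3]
  rw [hQ]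
  exact ⟨rfl, rfl, rfl⟩
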